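/- Let N be an odd positive integer and let C be a cyclic binary code of length N which is weakly self-dual (C ⊆ C^⊥). Then C is doubly even: the Hamming weight of every codeword of C is divisible by four. -/

import Mathlib

open Polynomial

/-- Cyclic shift: `(c_0,…,c_{N-1}) ↦ (c_{N-1},c_0,…,c_{N-2})`. -/
def cshift {N : ℕ} {F : Type*} (c : Fin N → F) : Fin N → F :=
  fun i => c ((finRotate N).symm i)

/-- The code polynomial associated to a codeword. -/
noncomputable def toPoly {F : Type*} [Semiring F] {N : ℕ} (c : Fin N → F) : Polynomial F :=
  ∑ i, Polynomial.C (c i) * Polynomial.X ^ (i : ℕ)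

/-- The dual code of a linear code. -/
def dualCode {F : Type*} [CommRing F] {ι : Type*} [Fintype ι]
    (C : Submodule F (ι → F)) : Submodule F (ι → F) where
  carrier := { v | ∀ c ∈ C, ∑ i, c i * v i = 0 }
  zero_mem' := by intro c hc; simp
  add_mem' := by
    intro a b ha hb c hc
    simp [mul_add, Finset.sum_add_distrib, ha c hc, hb c hc]
  smul_mem' := by
    intro r a ha c hc
    simp [Pi.smul_apply, smul_eq_mul, mul_left_comm, ← Finset.mul_sum, ha c hc]

/-- `g` is the generator polynomial of `C`: the (unique) monic nonzero code
polynomial of least degree. -/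
def IsGenPoly {F : Type*} [Field F] {N : ℕ} (C : Submodule F (Fin N → F))
    (g : Polynomial F) : Prop :=
  g.Monic ∧ (∃ c ∈ C, toPoly c = g) ∧
    ∀ c ∈ C, toPoly c ≠ 0 → g.degree ≤ (toPoly c).degree

/-- Any weakly self-dual cyclic binary code of odd length is doubly even:
the Hamming weight of every codeword is divisible by four. -/
/- Auxiliary lemmas -/

private lemma zm_norm_eq {N : ℕ} (c : Fin N → ZMod 2) :
    hammingNorm c = ∑ i, (c i).val := by
  rw [hammingNorm, Finset.card_filter]
  exact Finset.sum_congr rfl fun i _ => by generalize c i = x; revert x; decide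

private lemma zm_key {N : ℕ} (a b : Fin N → ZMod 2) (h : ∑ i, a i * b i = 0) :
    ((hammingNorm (a + b) : ℕ) : ZMod 4)
      = (hammingNorm a : ZMod 4) + (hammingNorm b : ZMod 4) := by
  set S : ℕ := ∑ i, (a i).val * (b i).val with hS
  have hEq : hammingNorm (a + b) + 2 * S = hammingNorm a + hammingNorm b := by
    rw [zm_norm_eq, zm_norm_eq, zm_norm_eq, hS, Finset.mul_sum,
      ← Finset.sum_add_distrib, ← Finset.sum_add_distrib]
    refine Finset.sum_congr rfl fun i _ => ?_
    have : ∀ x y : ZMod 2, (x + y).val + 2 * (x.val * y.val) = x.val + y.val := by decide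
    simpa using this (a i) (b i)
  have hdvd : 2 ∣ S := by
    have hcast : ((S : ℕ) : ZMod 2) = 0 := by
      rw [hS]
      push_cast
      have : ∀ x : ZMod 2, ((x.val : ℕ) : ZMod 2) = x := by decide
      simp only [this]
      exact h
    exact (ZMod.natCast_eq_zero_iff S 2).mp hcast
  obtain ⟨k, hk⟩ := hdvd
  have h4 := congrArg (fun m : ℕ => (m : ZMod 4)) hEq
  simp only [Nat.cast_add] at h4
  rw [show ((2 * S : ℕ) : ZMod 4) = 0 from
    (ZMod.natCast_eq_zero_iff _ 4).mpr ⟨k, by omega⟩, add_zero] at h4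
  exact h4

private lemma zm_shift_apply {n : ℕ} (c : Fin (n + 1) → ZMod 2) (k : Fin (n + 1)) :
    cshift c k = c (k - 1) := by
  have : (finRotate (n + 1)).symm k = k - 1 := by
    rw [Equiv.symm_apply_eq, finRotate_succ_apply, sub_add_cancel]
  rw [cshift, this]

open Fin.NatCast in
private lemma zm_iter_apply {n : ℕ} (c : Fin (n + 1) → ZMod 2) (m : ℕ) (k : Fin (n + 1)) :
    (cshift^[m] c) k = c (k - (m : Fin (n + 1))) := by
  induction m generalizing k with
  | zero => simp
  | succ m ih =>
    rw [Function.iterate_succ_apply', zm_shift_apply, ih]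
    congr 1
    push_cast
    abel

private lemma zm_norm_shift {N : ℕ} (c : Fin N → ZMod 2) :
    hammingNorm (cshift c) = hammingNorm c := by
  rw [zm_norm_eq, zm_norm_eq]
  exact Equiv.sum_comp (finRotate N).symm fun j => (c j).val

private lemma zm_norm_iter {N : ℕ} (c : Fin N → ZMod 2) (m : ℕ) :
    hammingNorm (cshift^[m] c) = hammingNorm c := by
  induction m with
  | zero => rfl
  | succ m ih => rw [Function.iterate_succ_apply', zm_norm_shift, ih]


open Fin.NatCast in
theorem stmt_0 (N : ℕ) (hN : 0 < N) (hodd : Odd N)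
    (C : Submodule (ZMod 2) (Fin N → ZMod 2))
    (hcyc : ∀ c ∈ C, cshift c ∈ C)
    (hsd : C ≤ dualCode C) :
    ∀ c ∈ C, 4 ∣ hammingNorm c := by
  have hsd' : ∀ v ∈ C, ∀ c ∈ C, ∑ i, c i * v i = 0 := fun v hv c hc => hsd hv c hc
  clear hsd
  rename' hsd' => hsd
  obtain ⟨n, rfl⟩ := Nat.exists_eq_succ_of_ne_zero hN.ne'
  intro c hc
  -- all iterated shifts are in C
  have hiter : ∀ m : ℕ, cshift^[m] c ∈ C := by
    intro m
    induction m with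
    | zero => exact hc
    | succ m ih => rw [Function.iterate_succ_apply']; exact hcyc _ ih
  -- sum of coordinates of c is zero
  have hsum0 : ∑ j, c j = 0 := by
    have := hsd c hc c hc
    have hmul : ∀ x : ZMod 2, x * x = x := by decide
    simpa [hmul] using this
  -- the sum of all N shifts is the zero vector
  have hT : (∑ m ∈ Finset.range (n + 1), cshift^[m] c) = 0 := by
    funext k
    rw [Finset.sum_apply]
    have h1 : ∀ m ∈ Finset.range (n + 1), (cshift^[m] c) k = c (k - (m : Fin (n + 1))) :=
      fun m _ => zm_iter_apply c m k
    rw [Finset.sum_congr rfl h1]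
    have h2 : ∑ m ∈ Finset.range (n + 1), c (k - (m : Fin (n + 1)))
        = ∑ i : Fin (n + 1), c (k - i) := by
      rw [← Fin.sum_univ_eq_sum_range (fun m => c (k - (m : Fin (n + 1))))]
      exact Finset.sum_congr rfl fun i _ => by rw [Fin.cast_val_eq_self]
    have h3 : ∑ i : Fin (n + 1), c (k - i) = ∑ j, c j := Equiv.sum_comp (Equiv.subLeft k) c
    rw [h2, h3, hsum0]
    simp
  -- partial sums: membership and weight formula mod 4
  have main : ∀ m : ℕ,
      (∑ j ∈ Finset.range m, cshift^[j] c) ∈ C ∧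
      ((hammingNorm (∑ j ∈ Finset.range m, cshift^[j] c) : ℕ) : ZMod 4)
        = (m : ZMod 4) * (hammingNorm c : ZMod 4) := by
    intro m
    induction m with
    | zero => simp
    | succ m ih =>
      obtain ⟨ihmem, ihnorm⟩ := ih
      rw [Finset.sum_range_succ]
      constructor
      · exact C.add_mem ihmem (hiter m)
      · rw [zm_key _ _ (hsd _ (hiter m) _ ihmem), ihnorm, zm_norm_iter]
        push_cast
        ring
  obtain ⟨-, hnorm⟩ := main (n + 1)
  rw [hT] at hnorm
  simp only [hammingNorm_zero, Nat.cast_zero] at hnorm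
  have h4 : ((( (n + 1) * hammingNorm c : ℕ)) : ZMod 4) = 0 := by
    push_cast at hnorm ⊢
    exact hnorm.symm
  have hdvd : 4 ∣ (n + 1) * hammingNorm c :=
    (ZMod.natCast_eq_zero_iff _ 4).mp h4
  have hcop : Nat.Coprime 4 (n + 1) := by
    have h2 : Nat.Coprime 2 (n + 1) := Nat.coprime_two_left.mpr hodd
    exact Nat.Coprime.pow_left 2 h2
  exact hcop.dvd_of_dvd_mul_left hdvd
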